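/- Let A and B be 2×2 real matrices with det([A,B]) > 0, where [A,B] = AB − BA, and define Δ(u) = tr(A + u·B)² − 4·det(A + u·B) for u ∈ ℝ. If tr(B)² − 4·det(B) < 0 (B has non-real eigenvalues), then Δ(u) < 0 for every u ∈ ℝ; if tr(B)² − 4·det(B) > 0 (B has two distinct real eigenvalues), then Δ(u) > 0 for every u ∈ ℝ. -/

import Mathlib

private lemma quad_sign (c0 c1 c2 K : ℝ) (hK : 0 < K)
    (hid : c1^2 - 4*c2*c0 = -16*K) :
    (c2 < 0 → ∀ u : ℝ, c2*u^2 + c1*u + c0 < 0) ∧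
    (0 < c2 → ∀ u : ℝ, 0 < c2*u^2 + c1*u + c0) := by
  constructor <;> intro hc u <;> nlinarith [sq_nonneg (2*c2*u + c1), hK, hc, hid]

/-- If `det[A,B] > 0`, then: if `B` has non-real eigenvalues
(`tr(B)² − 4 det B < 0`) the discriminant `Δ(u) = tr(A+uB)² − 4 det(A+uB)` is
negative for all `u`, and if `B` has two distinct real eigenvalues
(`tr(B)² − 4 det B > 0`) then `Δ(u)` is positive for all `u`. -/
theorem discriminant_sign_of_det_commutator_pos (A B : Matrix (Fin 2) (Fin 2) ℝ)
    (h : 0 < (A * B - B * A).det) :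
    ((Matrix.trace B) ^ 2 - 4 * B.det < 0 →
      ∀ u : ℝ, (Matrix.trace (A + u • B)) ^ 2 - 4 * (A + u • B).det < 0) ∧
    (0 < (Matrix.trace B) ^ 2 - 4 * B.det →
      ∀ u : ℝ, 0 < (Matrix.trace (A + u • B)) ^ 2 - 4 * (A + u • B).det) := by
  have hK : (A * B - B * A).det =
      (A 0 0*B 0 0+A 0 1*B 1 0 - (B 0 0*A 0 0+B 0 1*A 1 0))
        * (A 1 0*B 0 1+A 1 1*B 1 1 - (B 1 0*A 0 1+B 1 1*A 1 1))
      - (A 0 0*B 0 1+A 0 1*B 1 1 - (B 0 0*A 0 1+B 0 1*A 1 1))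
        * (A 1 0*B 0 0+A 1 1*B 1 0 - (B 1 0*A 0 0+B 1 1*A 1 0)) := by
    simp [Matrix.det_fin_two, Matrix.mul_apply, Fin.sum_univ_two]
  rw [hK] at h
  set a0 := A 0 0; set a1 := A 0 1; set a2 := A 1 0; set a3 := A 1 1
  set b0 := B 0 0; set b1 := B 0 1; set b2 := B 1 0; set b3 := B 1 1
  set c2 := (b0+b3)^2 - 4*(b0*b3 - b1*b2) with hc2
  set c1 := 2*(a0+a3)*(b0+b3) - 4*(a0*b3+a3*b0-a1*b2-a2*b1) with hc1
  set c0 := (a0+a3)^2 - 4*(a0*a3 - a1*a2) with hc0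
  have hid : c1^2 - 4*c2*c0 = -16*((a0*b0+a1*b2 - (b0*a0+b1*a2))
        * (a2*b1+a3*b3 - (b2*a1+b3*a3))
      - (a0*b1+a1*b3 - (b0*a1+b1*a3)) * (a2*b0+a3*b2 - (b2*a0+b3*a2))) := by
    rw [hc0, hc1, hc2]; ring
  have key := quad_sign c0 c1 c2 _ h hid
  have hB : (Matrix.trace B) ^ 2 - 4 * B.det = c2 := by
    simp [Matrix.det_fin_two, Matrix.trace_fin_two, hc2]; rfl
  have hD : ∀ u : ℝ, (Matrix.trace (A + u • B)) ^ 2 - 4 * (A + u • B).det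
      = c2*u^2 + c1*u + c0 := by
    intro u
    simp [Matrix.det_fin_two, Matrix.trace_fin_two, Matrix.add_apply, Matrix.smul_apply,
      smul_eq_mul, hc0, hc1, hc2]
    ring
  rw [hB]
  constructor <;> intro hc u <;> rw [hD u]
  · exact key.1 (by linarith) u
  · exact key.2 (by linarith) u
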